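/- In the commuting-observable quantum setting, let s¹, s² be sign sequences pairable at index T, and let B = Σ_{j=1,2} (A_T + s^j_T B_T) · ∏_{i≠T} O_i(s^j_i) be the pair Bell operator. Then for every unit vector ψ, the expectation ⟨ψ, B ψ⟩ is at most 2√2. -/

import Mathlib

/-!
STATEMENT 1: quantum bound 2√2 for the pair Bell operator in the
commuting-observable setting.
-/

open scoped InnerProductSpace

noncomputable section

variable {N : ℕ} {H : Type} [NormedAddCommGroup H] [InnerProductSpace ℂ H]

/-- The observable associated to the symbol `k`: `O_i(0) = I`, `O_i(+1) = A_i`,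
`O_i(-1) = B_i`. -/
def obs (A B : Fin N → H →ₗ[ℂ] H) (i : Fin N) (k : ℤ) : H →ₗ[ℂ] H :=
  if k = 1 then A i else if k = -1 then B i else 1

/-- Product of commuting operators over all parties `i ≠ T` (in the canonical
order of `Fin N`; all the factors commute so the order is irrelevant). -/
def prodExcept (T : Fin N) (f : Fin N → (H →ₗ[ℂ] H)) : H →ₗ[ℂ] H :=
  (((List.finRange N).filter (fun i => i ≠ T)).map f).prod


lemma mul_symm {f g : H →ₗ[ℂ] H} (hf : f.IsSymmetric) (hg : g.IsSymmetric)
    (h : Commute f g) : (f * g).IsSymmetric := by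
  intro x y
  simp only [Module.End.mul_apply]
  rw [hf, hg]
  have := congrArg (fun T : H →ₗ[ℂ] H => T y) h
  simp only [Module.End.mul_apply] at this
  rw [this]

lemma list_prod_symm (l : List (H →ₗ[ℂ] H)) (hc : l.Pairwise Commute)
    (hs : ∀ x ∈ l, x.IsSymmetric) : l.prod.IsSymmetric := by
  induction l with
  | nil =>
    intro x y
    simp
  | cons a t ih =>
    rw [List.prod_cons]
    rcases List.pairwise_cons.mp hc with ⟨h1, h2⟩
    exact mul_symm (hs a (List.mem_cons_self)) (ih h2 (fun x hx => hs x (List.mem_cons_of_mem a hx)))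
      (Commute.list_prod_right _ _ (fun b hb => h1 b hb))

lemma list_prod_sq (l : List (H →ₗ[ℂ] H)) (hc : l.Pairwise Commute)
    (hsq : ∀ x ∈ l, x * x = 1) : l.prod * l.prod = 1 := by
  induction l with
  | nil => simp
  | cons a t ih =>
    rw [List.prod_cons]
    rcases List.pairwise_cons.mp hc with ⟨h1, h2⟩
    have hcom : Commute a t.prod := Commute.list_prod_right _ _ (fun b hb => h1 b hb)
    calc a * t.prod * (a * t.prod) = (a * a) * (t.prod * t.prod) := by
          rw [mul_assoc, ← mul_assoc t.prod a, ← hcom.eq, mul_assoc, ← mul_assoc]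
      _ = 1 := by rw [hsq a (List.mem_cons_self), ih h2 (fun x hx => hsq x (List.mem_cons_of_mem a hx)), one_mul]

lemma norm_apply_of_symm_sq {P : H →ₗ[ℂ] H} (hs : P.IsSymmetric) (h2 : P * P = 1)
    (ψ : H) : ‖P ψ‖ = ‖ψ‖ := by
  have h : ⟪P ψ, P ψ⟫_ℂ = ⟪ψ, ψ⟫_ℂ := by
    rw [hs ψ (P ψ)]
    have : P (P ψ) = ψ := by
      have := congrArg (fun T : H →ₗ[ℂ] H => T ψ) h2
      simpa [Module.End.mul_apply] using this
    rw [this]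
  rw [inner_self_eq_norm_sq_to_K, inner_self_eq_norm_sq_to_K] at h
  have h2' : (‖P ψ‖ : ℝ) ^ 2 = ‖ψ‖ ^ 2 := by exact_mod_cast h
  nlinarith [norm_nonneg (P ψ), norm_nonneg ψ]

lemma pair_bound (A B P Q : H →ₗ[ℂ] H)
    (hA : A.IsSymmetric) (hB : B.IsSymmetric)
    (hA2 : A * A = 1) (hB2 : B * B = 1)
    (ψ : H) (hψ : ‖ψ‖ = 1) (hP : ‖P ψ‖ = 1) (hQ : ‖Q ψ‖ = 1) :
    (⟪ψ, (A + B) (P ψ)⟫_ℂ).re + (⟪ψ, (A - B) (Q ψ)⟫_ℂ).re ≤ 2 * Real.sqrt 2 := by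
  set a := ‖(A + B) ψ‖ with ha
  set b := ‖(A - B) ψ‖ with hb
  have hCs : (A + B).IsSymmetric := hA.add hB
  have hDs : (A - B).IsSymmetric := hA.sub hB
  have hAψ : A (A ψ) = ψ := by
    have := congrArg (fun T : H →ₗ[ℂ] H => T ψ) hA2; simpa [Module.End.mul_apply] using this
  have hBψ : B (B ψ) = ψ := by
    have := congrArg (fun T : H →ₗ[ℂ] H => T ψ) hB2; simpa [Module.End.mul_apply] using this
  -- a² + b² = 4
  have hsum : a ^ 2 + b ^ 2 = 4 := by
    have h1 : (a : ℝ) ^ 2 = (⟪ψ, (A + B) ((A + B) ψ)⟫_ℂ).re := by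
      rw [← hCs ψ ((A + B) ψ), inner_self_eq_norm_sq_to_K]
      simp only [← Complex.ofReal_pow, Complex.ofReal_re, ha, LinearMap.add_apply]
      norm_cast
    have h2 : (b : ℝ) ^ 2 = (⟪ψ, (A - B) ((A - B) ψ)⟫_ℂ).re := by
      rw [← hDs ψ ((A - B) ψ), inner_self_eq_norm_sq_to_K]
      simp only [← Complex.ofReal_pow, Complex.ofReal_re, hb, LinearMap.sub_apply]
      norm_cast
    have hv : (A + B) ((A + B) ψ) + (A - B) ((A - B) ψ) = (4 : ℂ) • ψ := by
      simp only [LinearMap.add_apply, LinearMap.sub_apply, map_add, map_sub]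
      rw [hAψ, hBψ]
      module
    have : (⟪ψ, (A + B) ((A + B) ψ)⟫_ℂ + ⟪ψ, (A - B) ((A - B) ψ)⟫_ℂ) = (4 : ℂ) * ⟪ψ, ψ⟫_ℂ := by
      rw [← inner_add_right, hv, inner_smul_right]
    have hre := congrArg Complex.re this
    rw [Complex.add_re] at hre
    rw [h1, h2, hre]
    have : (⟪ψ, ψ⟫_ℂ) = (1 : ℂ) := by
      rw [inner_self_eq_norm_sq_to_K, hψ]; norm_num
    rw [this]; norm_num
  have e1 : (⟪ψ, (A + B) (P ψ)⟫_ℂ).re ≤ a := by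
    rw [← hCs ψ (P ψ)]
    calc (⟪(A + B) ψ, P ψ⟫_ℂ).re ≤ ‖(⟪(A + B) ψ, P ψ⟫_ℂ)‖ := Complex.re_le_norm _
      _ ≤ ‖(A + B) ψ‖ * ‖P ψ‖ := norm_inner_le_norm _ _
      _ = a := by rw [hP, mul_one]
  have e2 : (⟪ψ, (A - B) (Q ψ)⟫_ℂ).re ≤ b := by
    rw [← hDs ψ (Q ψ)]
    calc (⟪(A - B) ψ, Q ψ⟫_ℂ).re ≤ ‖(⟪(A - B) ψ, Q ψ⟫_ℂ)‖ := Complex.re_le_norm _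
      _ ≤ ‖(A - B) ψ‖ * ‖Q ψ‖ := norm_inner_le_norm _ _
      _ = b := by rw [hQ, mul_one]
  have ha0 : 0 ≤ a := norm_nonneg _
  have hb0 : 0 ≤ b := norm_nonneg _
  have hs2 : Real.sqrt 2 ^ 2 = 2 := Real.sq_sqrt (by norm_num)
  nlinarith [sq_nonneg (a - b), sq_nonneg (a + b - 2 * Real.sqrt 2), Real.sqrt_nonneg 2]



lemma obs_symm (A B : Fin N → H →ₗ[ℂ] H)
    (hAsa : ∀ i, (A i).IsSymmetric) (hBsa : ∀ i, (B i).IsSymmetric)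
    (i : Fin N) (k : ℤ) : (obs A B i k).IsSymmetric := by
  unfold obs
  split_ifs
  · exact hAsa i
  · exact hBsa i
  · intro x y; simp

lemma obs_sq (A B : Fin N → H →ₗ[ℂ] H)
    (hA2 : ∀ i, A i * A i = 1) (hB2 : ∀ i, B i * B i = 1)
    (i : Fin N) (k : ℤ) : obs A B i k * obs A B i k = 1 := by
  unfold obs
  split_ifs
  · exact hA2 i
  · exact hB2 i
  · exact one_mul 1

lemma obs_commute (A B : Fin N → H →ₗ[ℂ] H)
    (hAA : ∀ i j, i ≠ j → Commute (A i) (A j))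
    (hBB : ∀ i j, i ≠ j → Commute (B i) (B j))
    (hAB : ∀ i j, i ≠ j → Commute (A i) (B j))
    (i j : Fin N) (hij : i ≠ j) (k l : ℤ) :
    Commute (obs A B i k) (obs A B j l) := by
  unfold obs
  split_ifs
  · exact hAA i j hij
  · exact hAB i j hij
  · exact Commute.one_right _
  · exact (hAB j i hij.symm).symm
  · exact hBB i j hij
  · exact Commute.one_right _
  · exact Commute.one_left _
  · exact Commute.one_left _
  · exact Commute.one_left _


lemma prodExcept_norm (A B : Fin N → H →ₗ[ℂ] H)
    (hAsa : ∀ i, (A i).IsSymmetric) (hBsa : ∀ i, (B i).IsSymmetric)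
    (hA2 : ∀ i, A i * A i = 1) (hB2 : ∀ i, B i * B i = 1)
    (hAA : ∀ i j, i ≠ j → Commute (A i) (A j))
    (hBB : ∀ i j, i ≠ j → Commute (B i) (B j))
    (hAB : ∀ i j, i ≠ j → Commute (A i) (B j))
    (T : Fin N) (s : Fin N → ℤ) (ψ : H) :
    ‖prodExcept T (fun i => obs A B i (s i)) ψ‖ = ‖ψ‖ := by
  set l := ((List.finRange N).filter (fun i => i ≠ T)) with hl
  have hnd : l.Pairwise (· ≠ ·) := List.Pairwise.filter _ (List.nodup_finRange N)
  set L := l.map (fun i => obs A B i (s i)) with hL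
  have hcom : L.Pairwise Commute := by
    rw [hL, List.pairwise_map]
    exact hnd.imp (fun h => obs_commute A B hAA hBB hAB _ _ h _ _)
  have hmem : ∀ x ∈ L, ∃ i, obs A B i (s i) = x := by
    intro x hx
    rcases List.mem_map.mp hx with ⟨i, _, hi⟩
    exact ⟨i, hi⟩
  have hsym : L.prod.IsSymmetric := by
    apply list_prod_symm _ hcom
    intro x hx
    rcases hmem x hx with ⟨i, hi⟩
    exact hi ▸ obs_symm A B hAsa hBsa i (s i)
  have hsq : L.prod * L.prod = 1 := by
    apply list_prod_sq _ hcom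
    intro x hx
    rcases hmem x hx with ⟨i, hi⟩
    exact hi ▸ obs_sq A B hA2 hB2 i (s i)
  exact norm_apply_of_symm_sq hsym hsq ψ

/-- The pair Bell operator built from two pairable sign sequences. -/
def pairBell (A B : Fin N → H →ₗ[ℂ] H) (s1 s2 : Fin N → ℤ) (T : Fin N) :
    H →ₗ[ℂ] H :=
  (A T + s1 T • B T) * prodExcept T (fun i => obs A B i (s1 i))
    + (A T + s2 T • B T) * prodExcept T (fun i => obs A B i (s2 i))

theorem quantum_pair_bell_bound [FiniteDimensional ℂ H]
    (A B : Fin N → H →ₗ[ℂ] H)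
    (hAsa : ∀ i, (A i).IsSymmetric) (hBsa : ∀ i, (B i).IsSymmetric)
    (hA2 : ∀ i, A i * A i = 1) (hB2 : ∀ i, B i * B i = 1)
    (hAA : ∀ i j, i ≠ j → Commute (A i) (A j))
    (hBB : ∀ i j, i ≠ j → Commute (B i) (B j))
    (hAB : ∀ i j, i ≠ j → Commute (A i) (B j))
    (s1 s2 : Fin N → ℤ)
    (hs1 : ∀ i, s1 i = -1 ∨ s1 i = 0 ∨ s1 i = 1)
    (hs2 : ∀ i, s2 i = -1 ∨ s2 i = 0 ∨ s2 i = 1)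
    (T : Fin N) (hpair : s1 T * s2 T = -1)
    (ψ : H) (hψ : ‖ψ‖ = 1) :
    (⟪ψ, (pairBell A B s1 s2 T) ψ⟫_ℂ).re ≤ 2 * Real.sqrt 2 := by
  have hcase : (s1 T = 1 ∧ s2 T = -1) ∨ (s1 T = -1 ∧ s2 T = 1) := by
    rcases hs1 T with h | h | h <;> rcases hs2 T with h' | h' | h' <;>
      rw [h, h'] at hpair <;> norm_num at hpair <;> simp [h, h']
  set P1 := prodExcept T (fun i => obs A B i (s1 i)) with hP1def
  set P2 := prodExcept T (fun i => obs A B i (s2 i)) with hP2def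
  have hP1 : ‖P1 ψ‖ = 1 := by
    rw [hP1def, prodExcept_norm A B hAsa hBsa hA2 hB2 hAA hBB hAB T s1 ψ, hψ]
  have hP2 : ‖P2 ψ‖ = 1 := by
    rw [hP2def, prodExcept_norm A B hAsa hBsa hA2 hB2 hAA hBB hAB T s2 ψ, hψ]
  have hexp : (⟪ψ, (pairBell A B s1 s2 T) ψ⟫_ℂ).re
      = (⟪ψ, (A T + s1 T • B T) (P1 ψ)⟫_ℂ).re
        + (⟪ψ, (A T + s2 T • B T) (P2 ψ)⟫_ℂ).re := by
    rw [pairBell]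
    simp only [LinearMap.add_apply, Module.End.mul_apply, inner_add_right, Complex.add_re,
      ← hP1def, ← hP2def]
  rw [hexp]
  rcases hcase with ⟨e1, e2⟩ | ⟨e1, e2⟩
  · rw [e1, e2]
    have h1 : (A T + (1 : ℤ) • B T) = A T + B T := by rw [one_smul]
    have h2 : (A T + (-1 : ℤ) • B T) = A T - B T := by
      rw [neg_smul, one_smul, sub_eq_add_neg]
    rw [h1, h2]
    exact pair_bound (A T) (B T) P1 P2 (hAsa T) (hBsa T) (hA2 T) (hB2 T) ψ hψ hP1 hP2
  · rw [e1, e2]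
    have h1 : (A T + (-1 : ℤ) • B T) = A T - B T := by
      rw [neg_smul, one_smul, sub_eq_add_neg]
    have h2 : (A T + (1 : ℤ) • B T) = A T + B T := by rw [one_smul]
    rw [h1, h2, add_comm]
    exact pair_bound (A T) (B T) P2 P1 (hAsa T) (hBsa T) (hA2 T) (hB2 T) ψ hψ hP2 hP1


end
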